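/- Let A, E ∈ ℂ^{n×n} be such that the pencil L(s) = A + sE is regular, and let λ₁, …, λ_{n+1} ∈ ℂ be pairwise distinct with A + λ_i E invertible for each i. For each i set M_i = (A + λ_i E)^{−1} and let H_i ∈ ℂ^{2n×2n} be the Hermitian block matrix H_i = [[M_iᴴM_i, λ_i M_iᴴM_i], [conj(λ_i) M_iᴴM_i, |λ_i|² M_iᴴM_i]]. Then the unstructured distance to singularity satisfies δ(A,E)² ≥ max_{i=1,…,n+1} 1/λ_max(H_i), where δ(A,E) := inf{ √(‖Δ_A‖² + ‖Δ_E‖²) : Δ_A, Δ_E ∈ ℂ^{n×n}, det((A − Δ_A) + λ(E − Δ_E)) = 0 for all λ ∈ ℂ }. -/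

import Mathlib

open Matrix
open scoped Matrix.Norms.L2Operator ComplexConjugate

/-- The spectral norm (ℓ² operator norm) of a complex matrix. -/
noncomputable def specNorm {k : Type*} [Fintype k] [DecidableEq k]
    (X : Matrix k k ℂ) : ℝ :=
  ‖Matrix.toEuclideanCLM (𝕜 := ℂ) X‖

/-- The largest eigenvalue of a Hermitian matrix (junk value `0` otherwise). -/
noncomputable def lamMax {k : Type*} [Fintype k] [DecidableEq k]
    (H : Matrix k k ℂ) : ℝ :=
  if h : H.IsHermitian then ⨆ i, h.eigenvalues i else 0

/-- Sum of squared moduli of the entries of a vector. -/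
noncomputable def qsum {k : Type*} [Fintype k] (v : k → ℂ) : ℝ :=
  ∑ i, Complex.normSq (v i)

lemma qsum_nonneg {k : Type*} [Fintype k] (v : k → ℂ) : 0 ≤ qsum v :=
  Finset.sum_nonneg fun _ _ => Complex.normSq_nonneg _

lemma qsum_pos {k : Type*} [Fintype k] {v : k → ℂ} (hv : v ≠ 0) : 0 < qsum v := by
  obtain ⟨i, hi⟩ := Function.ne_iff.mp hv
  refine Finset.sum_pos' (fun _ _ => Complex.normSq_nonneg _) ⟨i, Finset.mem_univ i, ?_⟩
  exact Complex.normSq_pos.mpr hi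

lemma dot_self_eq_qsum {k : Type*} [Fintype k] (v : k → ℂ) :
    star v ⬝ᵥ v = (qsum v : ℂ) := by
  simp only [dotProduct, qsum, Pi.star_apply, Complex.ofReal_sum]
  congr 1; ext i
  rw [Complex.star_def, ← Complex.normSq_eq_conj_mul_self]

lemma euclidean_norm_sq {k : Type*} [Fintype k] (v : EuclideanSpace ℂ k) :
    ‖v‖ ^ 2 = qsum v := by
  rw [EuclideanSpace.norm_eq, Real.sq_sqrt (Finset.sum_nonneg fun _ _ => sq_nonneg _)]
  simp [qsum, Complex.sq_norm]

lemma qsum_mulVec_le {k : Type*} [Fintype k] [DecidableEq k]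
    (X : Matrix k k ℂ) (y : k → ℂ) :
    qsum (X *ᵥ y) ≤ specNorm X ^ 2 * qsum y := by
  have h := Matrix.l2_opNorm_mulVec X ((EuclideanSpace.equiv k ℂ).symm y)
  have h2 : ‖(EuclideanSpace.equiv k ℂ).symm (X *ᵥ y)‖ ^ 2
      ≤ (‖X‖ * ‖(EuclideanSpace.equiv k ℂ).symm y‖) ^ 2 :=
    pow_le_pow_left₀ (norm_nonneg _) h 2
  rw [euclidean_norm_sq, mul_pow, euclidean_norm_sq] at h2
  exact h2

/-- Rayleigh-quotient bound: for a Hermitian matrix `H`,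
`re (vᴴ H v) ≤ λ_max(H) ⬝ ‖v‖²`. -/
lemma rayleigh {k : Type*} [Fintype k] [DecidableEq k] {H : Matrix k k ℂ}
    (hH : H.IsHermitian) (v : k → ℂ) :
    (star v ⬝ᵥ H *ᵥ v).re ≤ lamMax H * qsum v := by
  set U : Matrix k k ℂ := (hH.eigenvectorUnitary : Matrix k k ℂ) with hUdef
  have hU1 : U * star U = 1 := Matrix.mem_unitaryGroup_iff.mp hH.eigenvectorUnitary.2
  set w : k → ℂ := star U *ᵥ v with hw
  have hsv : star v ᵥ* U = star w := by
    rw [hw, star_mulVec, Matrix.star_eq_conjTranspose, conjTranspose_conjTranspose]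
  have key : star v ⬝ᵥ H *ᵥ v
      = ∑ i, (hH.eigenvalues i : ℂ) * (Complex.normSq (w i) : ℂ) := by
    conv_lhs => rw [hH.spectral_theorem, Unitary.conjStarAlgAut_apply]
    rw [← Matrix.mulVec_mulVec, ← Matrix.mulVec_mulVec, dotProduct_mulVec, hsv,
      dotProduct_mulVec]
    have hwd : star w ᵥ* diagonal (RCLike.ofReal ∘ hH.eigenvalues)
        = fun i => (hH.eigenvalues i : ℂ) * star (w i) := by
      ext i
      rw [vecMul_diagonal]
      simp [mul_comm]
    rw [hwd]
    simp only [dotProduct, Pi.star_apply]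
    congr 1; ext i
    rw [Complex.star_def, mul_assoc]
    congr 1
    exact Complex.normSq_eq_conj_mul_self.symm
  have hqw : qsum w = qsum v := by
    have h1 : star w ⬝ᵥ w = star v ⬝ᵥ v := by
      rw [hw, star_mulVec, Matrix.star_eq_conjTranspose, conjTranspose_conjTranspose,
        dotProduct_mulVec, vecMul_vecMul, ← Matrix.star_eq_conjTranspose U, hU1, vecMul_one]
    have h2 := (dot_self_eq_qsum w).symm.trans (h1.trans (dot_self_eq_qsum v))
    exact_mod_cast h2
  have hre : (star v ⬝ᵥ H *ᵥ v).re = ∑ i, hH.eigenvalues i * Complex.normSq (w i) := by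
    rw [key, Complex.re_sum]
    simp
  rw [hre, lamMax, dif_pos hH, ← hqw, qsum, Finset.mul_sum]
  apply Finset.sum_le_sum
  intro i _
  apply mul_le_mul_of_nonneg_right _ (Complex.normSq_nonneg _)
  exact le_ciSup (Set.Finite.bddAbove (Set.finite_range _)) i

/-- In the empty-index case `lamMax` is `0`. -/
lemma lamMax_of_isEmpty {k : Type*} [Fintype k] [DecidableEq k] [IsEmpty k]
    (H : Matrix k k ℂ) : lamMax H = 0 := by
  rw [lamMax]
  split
  · exact Real.iSup_of_isEmpty _
  · rfl

/-- The key quantitative bound: if the perturbed pencil is singular at `μ` while the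
original pencil is invertible at `μ`, then `1/λ_max(H_μ) ≤ ‖Δ_A‖² + ‖Δ_E‖²`. -/
lemma key_bound {n : ℕ} (A E : Matrix (Fin n) (Fin n) ℂ) (μ : ℂ)
    (hinv : IsUnit (A + μ • E)) (DA DE : Matrix (Fin n) (Fin n) ℂ)
    (hdet : ((A - DA) + μ • (E - DE)).det = 0) :
    0 < lamMax (Matrix.fromBlocks
          (((A + μ • E)⁻¹)ᴴ * (A + μ • E)⁻¹)
          (μ • (((A + μ • E)⁻¹)ᴴ * (A + μ • E)⁻¹))
          ((starRingEnd ℂ μ) • (((A + μ • E)⁻¹)ᴴ * (A + μ • E)⁻¹))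
          ((starRingEnd ℂ μ * μ) • (((A + μ • E)⁻¹)ᴴ * (A + μ • E)⁻¹))) ∧
    1 / lamMax (Matrix.fromBlocks
          (((A + μ • E)⁻¹)ᴴ * (A + μ • E)⁻¹)
          (μ • (((A + μ • E)⁻¹)ᴴ * (A + μ • E)⁻¹))
          ((starRingEnd ℂ μ) • (((A + μ • E)⁻¹)ᴴ * (A + μ • E)⁻¹))
          ((starRingEnd ℂ μ * μ) • (((A + μ • E)⁻¹)ᴴ * (A + μ • E)⁻¹)))
      ≤ specNorm DA ^ 2 + specNorm DE ^ 2 := by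
  set M : Matrix (Fin n) (Fin n) ℂ := (A + μ • E)⁻¹ with hMdef
  set P : Matrix (Fin n) (Fin n) ℂ := Mᴴ * M with hPdef
  set H : Matrix (Fin n ⊕ Fin n) (Fin n ⊕ Fin n) ℂ :=
    Matrix.fromBlocks P (μ • P) ((starRingEnd ℂ μ) • P) ((starRingEnd ℂ μ * μ) • P) with hHdef
  have hM : M * (A + μ • E) = 1 :=
    Matrix.nonsing_inv_mul _ ((Matrix.isUnit_iff_isUnit_det _).mp hinv)
  have hP : P.IsHermitian := Matrix.isHermitian_conjTranspose_mul_self M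
  have hHerm : H.IsHermitian := by
    rw [hHdef, Matrix.IsHermitian, Matrix.fromBlocks_conjTranspose,
      Matrix.conjTranspose_smul, Matrix.conjTranspose_smul, Matrix.conjTranspose_smul, hP.eq]
    congr 1 <;> simp [Complex.star_def, mul_comm]
  have hrearr : (A - DA) + μ • (E - DE) = (A + μ • E) - (DA + μ • DE) := by
    rw [smul_sub]; abel
  rw [hrearr] at hdet
  obtain ⟨y, hy0, hy⟩ := (Matrix.exists_mulVec_eq_zero_iff).mpr hdet
  rw [Matrix.sub_mulVec, sub_eq_zero] at hy
  set u : Fin n → ℂ := DA *ᵥ y with hu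
  set w : Fin n → ℂ := DE *ᵥ y with hwdef
  set z : Fin n → ℂ := u + μ • w with hz
  have hzy : (DA + μ • DE) *ᵥ y = z := by
    rw [hz, Matrix.add_mulVec, Matrix.smul_mulVec]
  have hMz : M *ᵥ z = y := by
    rw [← hzy, ← hy, Matrix.mulVec_mulVec, hM, Matrix.one_mulVec]
  set v : (Fin n ⊕ Fin n) → ℂ := Sum.elim u w with hv
  have hvHv : star v ⬝ᵥ H *ᵥ v = (qsum y : ℂ) := by
    have h1 : star v ⬝ᵥ H *ᵥ v = star z ⬝ᵥ P *ᵥ z := by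
      rw [hv, hHdef, Matrix.fromBlocks_mulVec, Function.star_sumElim,
        sumElim_dotProduct_sumElim, hz]
      simp only [Matrix.smul_mulVec, Matrix.add_mulVec, Matrix.mulVec_add,
        Matrix.mulVec_smul, Sum.elim_comp_inl, Sum.elim_comp_inr,
        dotProduct_add, dotProduct_smul, add_dotProduct, smul_dotProduct, star_add,
        star_smul, Complex.star_def, smul_eq_mul]
      ring
    rw [h1, hPdef, ← Matrix.mulVec_mulVec, Matrix.dotProduct_mulVec, ← Matrix.star_mulVec,
      hMz, dot_self_eq_qsum]
  have hray := rayleigh hHerm v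
  rw [hvHv, Complex.ofReal_re] at hray
  have hqv : qsum v = qsum u + qsum w := by
    rw [qsum, Fintype.sum_sum_type]
    rfl
  have hqu : qsum u ≤ specNorm DA ^ 2 * qsum y := qsum_mulVec_le DA y
  have hqw : qsum w ≤ specNorm DE ^ 2 * qsum y := qsum_mulVec_le DE y
  have hypos : 0 < qsum y := qsum_pos hy0
  set L := lamMax H with hL
  have hLnn : 0 ≤ L := by
    by_contra hneg
    push_neg at hneg
    have hvq : 0 ≤ qsum v := qsum_nonneg v
    nlinarith
  have h1L : 1 ≤ L * (specNorm DA ^ 2 + specNorm DE ^ 2) := by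
    have hchain : qsum y ≤ L * (specNorm DA ^ 2 + specNorm DE ^ 2) * qsum y := by
      calc qsum y ≤ L * qsum v := hray
        _ = L * (qsum u + qsum w) := by rw [hqv]
        _ ≤ L * ((specNorm DA ^ 2 + specNorm DE ^ 2) * qsum y) := by
            apply mul_le_mul_of_nonneg_left _ hLnn
            rw [add_mul]
            exact add_le_add hqu hqw
        _ = L * (specNorm DA ^ 2 + specNorm DE ^ 2) * qsum y := by ring
    nlinarith
  have hLpos : 0 < L := by
    rcases hLnn.lt_or_eq with h | h
    · exact h
    · exfalso; rw [← h] at h1L; simp at h1L; linarith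
  refine ⟨hLpos, ?_⟩
  rw [div_le_iff₀ hLpos]
  linarith [h1L]

/-- A family of lower bounds for the unstructured distance to singularity:
for pairwise distinct `λ₁, …, λ_{n+1}` at which the pencil is invertible,
`δ(A,E)² ≥ max_i 1/λ_max(H_i)` with
`H_i = [[M_iᴴM_i, λ_i M_iᴴM_i], [conj(λ_i) M_iᴴM_i, |λ_i|² M_iᴴM_i]]`,
`M_i = (A + λ_i E)⁻¹`. -/
theorem unstructured_distance_to_singularity_lower_bound
    {n : ℕ} (A E : Matrix (Fin n) (Fin n) ℂ)
    (hreg : ∃ l : ℂ, (A + l • E).det ≠ 0)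
    (l : Fin (n + 1) → ℂ) (hl : Function.Injective l)
    (hinv : ∀ i, IsUnit (A + l i • E)) :
    (sInf {r : ℝ | ∃ DA DE : Matrix (Fin n) (Fin n) ℂ,
        (∀ μ : ℂ, ((A - DA) + μ • (E - DE)).det = 0) ∧
        r = Real.sqrt (specNorm DA ^ 2 + specNorm DE ^ 2)}) ^ 2 ≥
      ⨆ i : Fin (n + 1),
        1 / lamMax (Matrix.fromBlocks
          (((A + l i • E)⁻¹)ᴴ * (A + l i • E)⁻¹)
          (l i • (((A + l i • E)⁻¹)ᴴ * (A + l i • E)⁻¹))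
          ((starRingEnd ℂ (l i)) • (((A + l i • E)⁻¹)ᴴ * (A + l i • E)⁻¹))
          ((starRingEnd ℂ (l i) * l i) •
            (((A + l i • E)⁻¹)ᴴ * (A + l i • E)⁻¹))) := by
  rw [ge_iff_le]
  rcases Nat.eq_zero_or_pos n with hn | hn
  · subst hn
    have hzero : ∀ i : Fin 1,
        (1 : ℝ) / lamMax (Matrix.fromBlocks
          (((A + l i • E)⁻¹)ᴴ * (A + l i • E)⁻¹)
          (l i • (((A + l i • E)⁻¹)ᴴ * (A + l i • E)⁻¹))
          ((starRingEnd ℂ (l i)) • (((A + l i • E)⁻¹)ᴴ * (A + l i • E)⁻¹))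
          ((starRingEnd ℂ (l i) * l i) •
            (((A + l i • E)⁻¹)ᴴ * (A + l i • E)⁻¹))) = 0 := by
      intro i
      rw [lamMax_of_isEmpty, div_zero]
    calc (⨆ i : Fin 1, (1 : ℝ) / lamMax _) = ⨆ _ : Fin 1, (0 : ℝ) := by
          exact iSup_congr hzero
      _ = 0 := ciSup_const
      _ ≤ _ := sq_nonneg _
  · haveI hne : Nonempty (Fin n) := ⟨⟨0, hn⟩⟩
    set S := {r : ℝ | ∃ DA DE : Matrix (Fin n) (Fin n) ℂ,
        (∀ μ : ℂ, ((A - DA) + μ • (E - DE)).det = 0) ∧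
        r = Real.sqrt (specNorm DA ^ 2 + specNorm DE ^ 2)} with hS
    have hsing : ∀ μ : ℂ, ((A - A) + μ • (E - E)).det = 0 := by
      intro μ
      rw [sub_self, sub_self, smul_zero, add_zero]
      exact Matrix.det_zero
    have hSne : S.Nonempty :=
      ⟨Real.sqrt (specNorm A ^ 2 + specNorm E ^ 2), A, E, hsing, rfl⟩
    apply ciSup_le
    intro i
    set c : ℝ := 1 / lamMax (Matrix.fromBlocks
          (((A + l i • E)⁻¹)ᴴ * (A + l i • E)⁻¹)
          (l i • (((A + l i • E)⁻¹)ᴴ * (A + l i • E)⁻¹))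
          ((starRingEnd ℂ (l i)) • (((A + l i • E)⁻¹)ᴴ * (A + l i • E)⁻¹))
          ((starRingEnd ℂ (l i) * l i) •
            (((A + l i • E)⁻¹)ᴴ * (A + l i • E)⁻¹))) with hc
    have hcnonneg : 0 ≤ c := by
      have := (key_bound A E (l i) (hinv i) A E (hsing (l i))).1
      positivity
    have hlow : ∀ r ∈ S, Real.sqrt c ≤ r := by
      rintro r ⟨DA, DE, hDs, rfl⟩
      apply Real.sqrt_le_sqrt
      exact (key_bound A E (l i) (hinv i) DA DE (hDs (l i))).2
    have hInf : Real.sqrt c ≤ sInf S := le_csInf hSne hlow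
    calc c = Real.sqrt c ^ 2 := (Real.sq_sqrt hcnonneg).symm
      _ ≤ (sInf S) ^ 2 := by
          apply pow_le_pow_left₀ (Real.sqrt_nonneg c) hInf
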